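/- Let M be an s×s real symmetric matrix, U an s×t real matrix, W a t×t real matrix, and let P denote the orthogonal projection of ℝ^t onto the range of Wᵀ. Then for every real λ, the block matrix [[M + λ·U·P·Uᵀ, λ·U·Wᵀ],[λ·W·Uᵀ, λ·W·Wᵀ]] is congruent to the block diagonal matrix [[M, 0],[0, λ·W·Wᵀ]] via an invertible matrix S independent of λ. -/

import Mathlib

open Matrix

/-- Congruence of the bordered matrix `[[M + λ U P Uᵀ, λ U Wᵀ],[λ W Uᵀ, λ W Wᵀ]]` to
`diag(M, λ W Wᵀ)` via an invertible matrix `S` independent of `λ`, where `P` is the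
orthogonal projection onto the range of `Wᵀ` (a symmetric idempotent with that range). -/
theorem bordered_congruence {s t : ℕ}
    (M : Matrix (Fin s) (Fin s) ℝ) (hM : M.IsSymm)
    (U : Matrix (Fin s) (Fin t) ℝ) (W : Matrix (Fin t) (Fin t) ℝ)
    (P : Matrix (Fin t) (Fin t) ℝ) (hPsymm : P.IsSymm) (hPidem : P * P = P)
    (hPrange : LinearMap.range P.mulVecLin = LinearMap.range Wᵀ.mulVecLin) :
    ∃ S : Matrix (Fin s ⊕ Fin t) (Fin s ⊕ Fin t) ℝ, IsUnit S ∧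
      ∀ lam : ℝ,
        Matrix.fromBlocks (M + lam • (U * P * Uᵀ)) (lam • (U * Wᵀ))
          (lam • (W * Uᵀ)) (lam • (W * Wᵀ)) =
        Sᵀ * Matrix.fromBlocks M 0 0 (lam • (W * Wᵀ)) * S := by
  -- P fixes vectors in the range of Wᵀ
  have hPfix : ∀ v ∈ LinearMap.range Wᵀ.mulVecLin, P.mulVec v = v := by
    intro v hv
    rw [← hPrange] at hv
    obtain ⟨y, rfl⟩ := hv
    simp only [Matrix.mulVecLin_apply]
    rw [Matrix.mulVec_mulVec, hPidem]
  -- P * Wᵀ = Wᵀ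
  have hPWt : P * Wᵀ = Wᵀ := by
    ext i j
    have hmem : Wᵀ.mulVec (Pi.single j 1) ∈ LinearMap.range Wᵀ.mulVecLin :=
      ⟨Pi.single j 1, rfl⟩
    have := congrFun (hPfix _ hmem) i
    rw [Matrix.mulVec_mulVec] at this
    simpa [Matrix.mulVec_single] using this
  have hWP : W * P = W := by
    have := congrArg Matrix.transpose hPWt
    rwa [Matrix.transpose_mul, Matrix.transpose_transpose, hPsymm.eq] at this
  -- construct X with Wᵀ * X = P * Uᵀ
  have hcol : ∀ j : Fin s, ∃ x : Fin t → ℝ, Wᵀ.mulVec x = P.mulVec (fun k => U j k) := by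
    intro j
    have hmem : P.mulVec (fun k => U j k) ∈ LinearMap.range Wᵀ.mulVecLin := by
      rw [← hPrange]
      exact ⟨fun k => U j k, rfl⟩
    obtain ⟨x, hx⟩ := hmem
    exact ⟨x, hx⟩
  choose X hX using hcol
  set Xm : Matrix (Fin t) (Fin s) ℝ := fun i j => X j i with hXm
  have hWX : Wᵀ * Xm = P * Uᵀ := by
    ext i j
    have := congrFun (hX j) i
    rw [Matrix.mul_apply]
    simpa [Matrix.mulVec, Matrix.mul_apply, dotProduct, hXm] using this
  have hXtW : Xmᵀ * W = U * P := by
    have := congrArg Matrix.transpose hWX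
    rwa [Matrix.transpose_mul, Matrix.transpose_mul, Matrix.transpose_transpose,
      Matrix.transpose_transpose, hPsymm.eq] at this
  have h1 : Xmᵀ * (W * Wᵀ) * Xm = U * P * Uᵀ := by
    calc Xmᵀ * (W * Wᵀ) * Xm = (Xmᵀ * W) * (Wᵀ * Xm) := by
          simp only [Matrix.mul_assoc]
      _ = U * P * (P * Uᵀ) := by rw [hXtW, hWX]
      _ = U * P * Uᵀ := by
          rw [Matrix.mul_assoc, ← Matrix.mul_assoc P, hPidem, ← Matrix.mul_assoc]
  have h2 : Xmᵀ * (W * Wᵀ) = U * Wᵀ := by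
    calc Xmᵀ * (W * Wᵀ) = (Xmᵀ * W) * Wᵀ := by rw [Matrix.mul_assoc]
      _ = U * (P * Wᵀ) := by rw [hXtW, Matrix.mul_assoc]
      _ = U * Wᵀ := by rw [hPWt]
  have h3 : W * Wᵀ * Xm = W * Uᵀ := by
    calc W * Wᵀ * Xm = W * (Wᵀ * Xm) := by rw [Matrix.mul_assoc]
      _ = (W * P) * Uᵀ := by rw [hWX, Matrix.mul_assoc]
      _ = W * Uᵀ := by rw [hWP]
  have hmul1 : (Matrix.fromBlocks 1 0 Xm 1 : Matrix (Fin s ⊕ Fin t) (Fin s ⊕ Fin t) ℝ) *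
      (Matrix.fromBlocks 1 0 (-Xm) 1 : Matrix (Fin s ⊕ Fin t) (Fin s ⊕ Fin t) ℝ) = 1 := by
    rw [Matrix.fromBlocks_multiply]
    simp [Matrix.fromBlocks_one]
  have hmul2 : (Matrix.fromBlocks 1 0 (-Xm) 1 : Matrix (Fin s ⊕ Fin t) (Fin s ⊕ Fin t) ℝ) *
      (Matrix.fromBlocks 1 0 Xm 1 : Matrix (Fin s ⊕ Fin t) (Fin s ⊕ Fin t) ℝ) = 1 := by
    rw [Matrix.fromBlocks_multiply]
    simp [Matrix.fromBlocks_one]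
  refine ⟨Matrix.fromBlocks 1 0 Xm 1, ?_, ?_⟩
  · exact ⟨⟨Matrix.fromBlocks 1 0 Xm 1, Matrix.fromBlocks 1 0 (-Xm) 1, hmul1, hmul2⟩, rfl⟩
  intro lam
  rw [Matrix.fromBlocks_transpose, Matrix.fromBlocks_multiply, Matrix.fromBlocks_multiply]
  simp only [Matrix.transpose_zero, Matrix.transpose_one, Matrix.mul_one, Matrix.one_mul,
    Matrix.mul_zero, Matrix.zero_mul, zero_add, add_zero, Matrix.smul_mul, Matrix.mul_smul,
    h1, h2, h3]
  rw [show U * Wᵀ * Xm = U * P * Uᵀ from by rw [Matrix.mul_assoc, hWX, ← Matrix.mul_assoc]]
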